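/- Suppose θ_0 = sup{θ≥0 : E[e^{θτ}]<∞} > 0 and η_0 = sup{η≥0 : E[e^{η|W|}]<∞} > 0, W^n = max(min(W, n), −n), Z_t = Σ_{i=1}^{M_t} W_i and Z_t^n = Σ_{i=1}^{M_t} W_i^n. Then for all δ > 0, lim_{n→∞} limsup_{t→∞} (1/t) log P(|Z_t/t − Z_t^n/t| > 2δ) ≤ −η_0 δ / 2. -/

import Mathlib

open MeasureTheory ProbabilityTheory Filter Real Set

noncomputable def elog (x : ENNReal) : EReal :=
  if x = 0 then ⊥ else if x = ⊤ then ⊤ else ((Real.log x.toReal : ℝ) : EReal)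

section Aux

variable {Ω : Type*} [MeasurableSpace Ω] {μ : Measure Ω}

lemma lintegral_prod_iIndep [IsProbabilityMeasure μ] {g : ℕ → Ω → ENNReal}
    (hg : ∀ i, Measurable (g i))
    (hind : iIndepFun g μ) (m : ℕ) :
    ∫⁻ ω, ∏ i ∈ Finset.range m, g i ω ∂μ
      = ∏ i ∈ Finset.range m, ∫⁻ ω, g i ω ∂μ := by
  induction m with
  | zero => simp
  | succ m ih =>
    simp only [Finset.prod_range_succ]
    have hI := hind.indepFun_prod_range_succ hg m
    rw [Finset.prod_fn] at hI
    have := lintegral_mul_eq_lintegral_mul_lintegral_of_indepFun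
      (Finset.measurable_prod _ (fun i _ => hg i)) (hg m) hI
    simp only [Pi.mul_apply, Finset.prod_apply] at this
    rw [this, ih]

lemma chernoff_aux (μ : Measure Ω) [IsProbabilityMeasure μ] (m : ℕ) (X : ℕ → Ω → ℝ)
    (hX : ∀ i, Measurable (X i))
    (hind : iIndepFun
      (fun i ω => ENNReal.ofReal (Real.exp (X i ω))) μ)
    (v : ℝ) :
    μ {ω | v ≤ ∑ i ∈ Finset.range m, X i ω}
      ≤ ENNReal.ofReal (Real.exp (-v)) *
        ∏ i ∈ Finset.range m, ∫⁻ ω, ENNReal.ofReal (Real.exp (X i ω)) ∂μ := by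
  have hXm : Measurable fun ω => ∑ i ∈ Finset.range m, X i ω :=
    Finset.measurable_sum _ (fun i _ => hX i)
  have hset : {ω | v ≤ ∑ i ∈ Finset.range m, X i ω}
      = {ω | 1 ≤ ENNReal.ofReal (Real.exp (∑ i ∈ Finset.range m, X i ω - v))} := by
    ext ω
    simp only [Set.mem_setOf_eq, ENNReal.one_le_ofReal, Real.one_le_exp_iff, sub_nonneg]
  have hmeas : Measurable fun ω => ENNReal.ofReal (Real.exp (∑ i ∈ Finset.range m, X i ω - v)) :=
    ((hXm.sub measurable_const).exp).ennreal_ofReal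
  calc μ {ω | v ≤ ∑ i ∈ Finset.range m, X i ω}
      ≤ ∫⁻ ω, ENNReal.ofReal (Real.exp (∑ i ∈ Finset.range m, X i ω - v)) ∂μ := by
        rw [hset]
        simpa using mul_meas_ge_le_lintegral₀ hmeas.aemeasurable 1
    _ = ENNReal.ofReal (Real.exp (-v)) *
        ∏ i ∈ Finset.range m, ∫⁻ ω, ENNReal.ofReal (Real.exp (X i ω)) ∂μ := by
        rw [← lintegral_prod_iIndep (fun i => ((hX i).exp).ennreal_ofReal) hind m,
          ← lintegral_const_mul _ (by
            exact Finset.measurable_prod _ (fun i _ => ((hX i).exp).ennreal_ofReal))]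
        congr 1
        ext ω
        rw [← ENNReal.ofReal_prod_of_nonneg (fun i _ => (Real.exp_pos _).le),
          ← ENNReal.ofReal_mul (Real.exp_pos _).le, ← Real.exp_sum, ← Real.exp_add]
        ring_nf

lemma elog_le_of_le_ofReal {x : ENNReal} {r : ℝ} (hr : 0 < r) (h : x ≤ ENNReal.ofReal r) :
    elog x ≤ ((Real.log r : ℝ) : EReal) := by
  unfold elog
  by_cases h0 : x = 0
  · simp [h0]
  have hne : x ≠ ⊤ := by
    intro ht
    rw [ht] at h
    exact (lt_irrefl _ (lt_of_le_of_lt h ENNReal.ofReal_lt_top)).elim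
  simp only [h0, hne, if_false]
  exact_mod_cast Real.log_le_log (ENNReal.toReal_pos h0 hne)
    (ENNReal.toReal_le_of_le_ofReal hr.le h)

lemma trunc_abs_le (x : ℝ) (c : ℝ) (hc : 0 ≤ c) :
    |x - max (min x c) (-c)| ≤ max (|x| - c) 0 := by
  rcases le_total x c with h1 | h1
  · rcases le_total (-c) x with h2 | h2
    · rw [min_eq_left h1, max_eq_left h2]
      simp
    · have hxc : x ≤ c := le_trans h2 (by linarith)
      rw [min_eq_left hxc, max_eq_right h2]
      have hxabs : |x| = -x := abs_of_nonpos (by linarith)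
      rw [abs_of_nonpos (by linarith)]
      rw [max_eq_left (by rw [hxabs]; linarith)]
      rw [hxabs]; ring_nf; linarith
  · rw [min_eq_right h1, max_eq_left (by linarith)]
    have hxabs : |x| = x := abs_of_nonneg (by linarith)
    rw [abs_of_nonneg (by linarith), max_eq_left (by rw [hxabs]; linarith), hxabs]

end Aux
theorem truncated_cumulative_exp_approx
    {Ω : Type*} [MeasurableSpace Ω] (μ : Measure Ω) [IsProbabilityMeasure μ]
    (τ W : ℕ → Ω → ℝ)
    (hmeas : ∀ i, Measurable (fun ω => (τ i ω, W i ω)))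
    (hindep : iIndepFun (fun i ω => (τ i ω, W i ω)) μ)
    (hident : ∀ i, IdentDistrib (fun ω => (τ i ω, W i ω)) (fun ω => (τ 0 ω, W 0 ω)) μ μ)
    (hpos : ∀ i, ∀ᵐ ω ∂μ, 0 < τ i ω)
    (hθ₀ : ∃ θ : ℝ, 0 < θ ∧ ∫⁻ ω, ENNReal.ofReal (Real.exp (θ * τ 0 ω)) ∂μ < ⊤)
    (η₀ : ENNReal)
    (hη₀ : η₀ = sSup {η : ENNReal | η ≠ ⊤ ∧
      ∫⁻ ω, ENNReal.ofReal (Real.exp (η.toReal * |W 0 ω|)) ∂μ < ⊤})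
    (hη₀pos : 0 < η₀)
    (S : ℕ → Ω → ℝ) (hS : ∀ n ω, S n ω = ∑ i ∈ Finset.range n, τ i ω)
    (M : ℝ → Ω → ℕ) (hM : ∀ t ω, M t ω = sSup {n : ℕ | S n ω ≤ t})
    (Z : ℝ → Ω → ℝ) (hZ : ∀ t ω, Z t ω = ∑ i ∈ Finset.range (M t ω), W i ω)
    (Zn : ℕ → ℝ → Ω → ℝ)
    (hZn : ∀ n t ω, Zn n t ω = ∑ i ∈ Finset.range (M t ω), max (min (W i ω) n) (-(n:ℝ))) :
    ∀ δ : ℝ, 0 < δ →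
      Filter.limsup (fun n : ℕ =>
          Filter.limsup (fun t : ℝ =>
            (((1 / t : ℝ)) : EReal) *
              elog (μ {ω | 2 * δ < |Z t ω / t - Zn n t ω / t|})) atTop) atTop
        ≤ -((η₀ : EReal) * ((δ / 2 : ℝ) : EReal)) := by
  intro δ hδ
  obtain ⟨θ, hθpos, hθfin⟩ := hθ₀
  have hτm : ∀ i, Measurable (τ i) := fun i => measurable_fst.comp (hmeas i)
  have hWm : ∀ i, Measurable (W i) := fun i => measurable_snd.comp (hmeas i)
  -- The function whose limsup in t we study, for each n
  set L : ℕ → EReal := fun n => Filter.limsup (fun t : ℝ =>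
      (((1 / t : ℝ)) : EReal) *
        elog (μ {ω | 2 * δ < |Z t ω / t - Zn n t ω / t|})) atTop with hL
  -- ρ and its properties
  set ρ : ENNReal := ∫⁻ ω, ENNReal.ofReal (Real.exp (-θ * τ 0 ω)) ∂μ with hρdef
  have hfm : Measurable fun ω => ENNReal.ofReal (Real.exp (-θ * τ 0 ω)) :=
    (((hτm 0).const_mul (-θ)).exp).ennreal_ofReal
  have hρ_ne_zero : ρ ≠ 0 := by
    intro h
    rw [hρdef, lintegral_eq_zero_iff hfm] at h
    obtain ⟨ω, hω⟩ := h.exists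
    simp only [Pi.zero_apply, ENNReal.ofReal_eq_zero] at hω
    exact absurd hω (not_le.2 (Real.exp_pos _))
  have hρ_lt_one : ρ < 1 := by
    have hub : ∫⁻ ω, (ENNReal.ofReal (Real.exp (-θ * τ 0 ω))
        + (1 - ENNReal.ofReal (Real.exp (-θ * τ 0 ω)))) ∂μ = 1 := by
      have : ∀ᵐ ω ∂μ, ENNReal.ofReal (Real.exp (-θ * τ 0 ω))
          + (1 - ENNReal.ofReal (Real.exp (-θ * τ 0 ω))) = 1 := by
        filter_upwards [hpos 0] with ω hω
        have h1 : ENNReal.ofReal (Real.exp (-θ * τ 0 ω)) ≤ 1 := by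
          rw [← ENNReal.ofReal_one]
          apply ENNReal.ofReal_le_ofReal
          rw [Real.exp_le_one_iff]
          nlinarith
        exact add_tsub_cancel_of_le h1
      rw [lintegral_congr_ae this]
      simp
    rw [lintegral_add_left hfm] at hub
    have hu_ne : ∫⁻ ω, (1 - ENNReal.ofReal (Real.exp (-θ * τ 0 ω))) ∂μ ≠ 0 := by
      intro h
      rw [lintegral_eq_zero_iff (f := fun ω => 1 - ENNReal.ofReal (Real.exp (-θ * τ 0 ω)))
        (measurable_const.sub hfm)] at h
      have : ∀ᵐ ω ∂μ, (0:ℝ) < τ 0 ω ∧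
          (1 : ENNReal) - ENNReal.ofReal (Real.exp (-θ * τ 0 ω)) = 0 := (hpos 0).and h
      obtain ⟨ω, hω1, hω2⟩ := this.exists
      have hlt : ENNReal.ofReal (Real.exp (-θ * τ 0 ω)) < 1 := by
        rw [← ENNReal.ofReal_one]
        apply ENNReal.ofReal_lt_ofReal_iff_of_nonneg (Real.exp_pos _).le |>.2
        rw [Real.exp_lt_one_iff]
        nlinarith
      rw [tsub_eq_zero_iff_le] at hω2
      exact absurd hω2 (not_le.2 hlt)
    have hρ_le : ρ ≤ 1 := by
      rw [← hub]; exact le_self_add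
    have hρ_ne_top : ρ ≠ ⊤ := (lt_of_le_of_lt hρ_le ENNReal.one_lt_top).ne
    calc ρ < ρ + ∫⁻ ω, (1 - ENNReal.ofReal (Real.exp (-θ * τ 0 ω))) ∂μ :=
          ENNReal.lt_add_right hρ_ne_top hu_ne
      _ = 1 := hub
  have hρ_ne_top : ρ ≠ ⊤ := (lt_of_lt_of_le hρ_lt_one le_top).ne
  set lρ : ℝ := Real.log ρ.toReal with hlρdef
  have hρ'pos : 0 < ρ.toReal := ENNReal.toReal_pos hρ_ne_zero hρ_ne_top
  have hρ'lt1 : ρ.toReal < 1 := by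
    have := (ENNReal.toReal_lt_toReal hρ_ne_top ENNReal.one_ne_top).2 hρ_lt_one
    simpa using this
  have hlρneg : lρ < 0 := Real.log_neg hρ'pos hρ'lt1
  -- En and its properties
  set En : ℕ → ℝ → ENNReal := fun n η =>
    ∫⁻ ω, ENNReal.ofReal (Real.exp (η * max (|W 0 ω| - (n:ℝ)) 0)) ∂μ with hEndef
  have hEn_ge_one : ∀ n η, 0 ≤ η → 1 ≤ En n η := by
    intro n η hη
    have h1 : (1 : ENNReal) = ∫⁻ _ω, (1:ENNReal) ∂μ := by simp
    rw [h1, hEndef]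
    apply lintegral_mono
    intro ω
    rw [← ENNReal.ofReal_one]
    apply ENNReal.ofReal_le_ofReal
    rw [Real.one_le_exp_iff]
    positivity
  have hEn_le : ∀ n η, 0 ≤ η →
      En n η ≤ ∫⁻ ω, ENNReal.ofReal (Real.exp (η * |W 0 ω|)) ∂μ := by
    intro n η hη
    apply lintegral_mono
    intro ω
    apply ENNReal.ofReal_le_ofReal
    apply Real.exp_le_exp.2
    apply mul_le_mul_of_nonneg_left _ hη
    exact max_le (by linarith [abs_nonneg (W 0 ω), (Nat.cast_nonneg n : (0:ℝ) ≤ n)]) (abs_nonneg _)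
  -- the main estimate
  have main : ∀ η a : ℝ, 0 < η → 1 ≤ a →
      (∫⁻ ω, ENNReal.ofReal (Real.exp (η * |W 0 ω|)) ∂μ) < ⊤ → ∀ n : ℕ,
      L n ≤ ((max (θ + a * lρ) (-(2*η*δ) + a * Real.log (En n η).toReal) : ℝ) : EReal) := by
    intro η a hη ha hfin n
    set lE : ℝ := Real.log (En n η).toReal with hlEdef
    have hEn_fin : En n η ≠ ⊤ := (lt_of_le_of_lt (hEn_le n η hη.le) hfin).ne
    have hE'1 : (1:ℝ) ≤ (En n η).toReal := by
      have := ENNReal.toReal_mono hEn_fin (hEn_ge_one n η hη.le)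
      simpa using this
    have hE'pos : (0:ℝ) < (En n η).toReal := lt_of_lt_of_le one_pos hE'1
    have hlE0 : 0 ≤ lE := Real.log_nonneg hE'1
    -- independence of transformed sequences
    have hindA : iIndepFun
        (fun i ω => ENNReal.ofReal (Real.exp ((-θ) * τ i ω))) μ := by
      have := hindep.comp (fun _ (p : ℝ × ℝ) => ENNReal.ofReal (Real.exp ((-θ) * p.1)))
        (fun _ => ((measurable_fst.const_mul (-θ)).exp).ennreal_ofReal)
      exact this
    have hindB : iIndepFun
        (fun i ω => ENNReal.ofReal (Real.exp (η * max (|W i ω| - (n:ℝ)) 0))) μ := by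
      have := hindep.comp
        (fun _ (p : ℝ × ℝ) => ENNReal.ofReal (Real.exp (η * max (|p.2| - (n:ℝ)) 0)))
        (fun _ => ((((measurable_snd.abs.sub measurable_const).max
          measurable_const).const_mul η).exp).ennreal_ofReal)
      exact this
    have hidA : ∀ i, ∫⁻ ω, ENNReal.ofReal (Real.exp ((-θ) * τ i ω)) ∂μ = ρ := by
      intro i
      have := ((hident i).comp
        (u := fun p : ℝ × ℝ => ENNReal.ofReal (Real.exp ((-θ) * p.1)))
        (((measurable_fst.const_mul (-θ)).exp).ennreal_ofReal)).lintegral_eq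
      rw [hρdef]
      simpa [Function.comp, neg_mul] using this
    have hidB : ∀ i, ∫⁻ ω, ENNReal.ofReal (Real.exp (η * max (|W i ω| - (n:ℝ)) 0)) ∂μ
        = En n η := by
      intro i
      have := ((hident i).comp
        (u := fun p : ℝ × ℝ => ENNReal.ofReal (Real.exp (η * max (|p.2| - (n:ℝ)) 0)))
        (((((measurable_snd.abs.sub measurable_const).max
          measurable_const).const_mul η).exp).ennreal_ofReal)).lintegral_eq
      simpa [Function.comp, hEndef] using this
    set m : ℝ → ℕ := fun t => ⌈a * t⌉₊ with hmdef
    set G : Set Ω := {ω | ∀ i, 0 < τ i ω} with hGdef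
    have hGc : μ Gᶜ = 0 := by
      have hG : ∀ᵐ ω ∂μ, ∀ i, 0 < τ i ω := ae_all_iff.2 hpos
      rw [hGdef, compl_setOf]
      exact hG
    -- event inclusion
    have hincl : ∀ t : ℝ, 1 ≤ t →
        {ω | 2 * δ < |Z t ω / t - Zn n t ω / t|} ∩ G ⊆
          {ω | -(θ*t) ≤ ∑ i ∈ Finset.range (m t), (-θ) * τ i ω} ∪
          {ω | 2*η*δ*t ≤ ∑ i ∈ Finset.range (m t), η * max (|W i ω| - (n:ℝ)) 0} := by
      intro t ht ω hω
      obtain ⟨hω1, hω2⟩ := hω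
      have ht0 : (0:ℝ) < t := lt_of_lt_of_le one_pos ht
      have hev2 : 2*δ*t < |Z t ω - Zn n t ω| := by
        have hsub : Z t ω / t - Zn n t ω / t = (Z t ω - Zn n t ω) / t := (sub_div _ _ _).symm
        have h1 : 2 * δ < |Z t ω - Zn n t ω| / t := by
          have := hω1
          rw [Set.mem_setOf_eq, hsub, abs_div, abs_of_pos ht0] at this
          exact this
        rw [lt_div_iff₀ ht0] at h1
        linarith
      have habs : |Z t ω - Zn n t ω|
          ≤ ∑ i ∈ Finset.range (M t ω), max (|W i ω| - (n:ℝ)) 0 := by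
        rw [hZ, hZn, ← Finset.sum_sub_distrib]
        refine le_trans (Finset.abs_sum_le_sum_abs _ _) ?_
        exact Finset.sum_le_sum (fun i _ => trunc_abs_le _ _ (Nat.cast_nonneg n))
      by_cases hm : m t ≤ M t ω
      · left
        have hSmono : ∀ k l : ℕ, k ≤ l → S k ω ≤ S l ω := by
          intro k l hkl
          rw [hS, hS]
          exact Finset.sum_le_sum_of_subset_of_nonneg (Finset.range_subset_range.2 hkl)
            (fun i _ _ => (hω2 i).le)
        have hSm : S (m t) ω ≤ t := by
          by_cases hb : BddAbove {k : ℕ | S k ω ≤ t}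
          · have hne : {k : ℕ | S k ω ≤ t}.Nonempty := ⟨0, by simp [hS]; linarith⟩
            have hmem := Nat.sSup_mem hne hb
            have hMS : S (M t ω) ω ≤ t := by
              rw [hM]
              exact hmem
            exact le_trans (hSmono _ _ hm) hMS
          · obtain ⟨k, hk, hmk⟩ := not_bddAbove_iff.1 hb (m t)
            exact le_trans (hSmono _ _ hmk.le) hk
        have hsum : ∑ i ∈ Finset.range (m t), (-θ) * τ i ω = -θ * S (m t) ω := by
          rw [hS, Finset.mul_sum]
        show -(θ*t) ≤ ∑ i ∈ Finset.range (m t), (-θ) * τ i ω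
        rw [hsum]
        nlinarith
      · right
        push_neg at hm
        have h2 : ∑ i ∈ Finset.range (M t ω), max (|W i ω| - (n:ℝ)) 0
            ≤ ∑ i ∈ Finset.range (m t), max (|W i ω| - (n:ℝ)) 0 :=
          Finset.sum_le_sum_of_subset_of_nonneg (Finset.range_subset_range.2 hm.le)
            (fun i _ _ => le_max_right _ _)
        show 2*η*δ*t ≤ ∑ i ∈ Finset.range (m t), η * max (|W i ω| - (n:ℝ)) 0
        rw [← Finset.mul_sum]
        nlinarith
    -- Chernoff bounds
    have hA : ∀ t : ℝ, μ {ω | -(θ*t) ≤ ∑ i ∈ Finset.range (m t), (-θ) * τ i ω}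
        ≤ ENNReal.ofReal (Real.exp (θ*t)) * ρ ^ (m t) := by
      intro t
      have h := chernoff_aux μ (m t) (fun i ω => (-θ) * τ i ω)
        (fun i => (hτm i).const_mul (-θ)) hindA (-(θ*t))
      rw [neg_neg] at h
      have heq : ∏ i ∈ Finset.range (m t),
          ∫⁻ ω, ENNReal.ofReal (Real.exp ((-θ) * τ i ω)) ∂μ = ρ ^ (m t) := by
        rw [Finset.prod_congr rfl (fun i _ => hidA i), Finset.prod_const, Finset.card_range]
      rw [heq] at h
      exact h
    have hB : ∀ t : ℝ, μ {ω | 2*η*δ*t ≤ ∑ i ∈ Finset.range (m t),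
          η * max (|W i ω| - (n:ℝ)) 0}
        ≤ ENNReal.ofReal (Real.exp (-(2*η*δ*t))) * (En n η) ^ (m t) := by
      intro t
      have h := chernoff_aux μ (m t) (fun i ω => η * max (|W i ω| - (n:ℝ)) 0)
        (fun i => (((hWm i).abs.sub measurable_const).max measurable_const).const_mul η)
        hindB (2*η*δ*t)
      have heq : ∏ i ∈ Finset.range (m t),
          ∫⁻ ω, ENNReal.ofReal (Real.exp (η * max (|W i ω| - (n:ℝ)) 0)) ∂μ
          = (En n η) ^ (m t) := by
        rw [Finset.prod_congr rfl (fun i _ => hidB i), Finset.prod_const, Finset.card_range]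
      rw [heq] at h
      exact h
    -- exponential-form bounds
    have hAe : ∀ t : ℝ, 1 ≤ t → ENNReal.ofReal (Real.exp (θ*t)) * ρ ^ (m t)
        ≤ ENNReal.ofReal (Real.exp (t * (θ + a * lρ))) := by
      intro t ht
      have ht0 : (0:ℝ) < t := by linarith
      have hρ_eq : ρ = ENNReal.ofReal (ρ.toReal) := (ENNReal.ofReal_toReal hρ_ne_top).symm
      rw [hρ_eq, ← ENNReal.ofReal_pow ENNReal.toReal_nonneg,
        ← ENNReal.ofReal_mul (Real.exp_pos _).le]
      apply ENNReal.ofReal_le_ofReal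
      have hpow : ρ.toReal ^ (m t) = Real.exp ((m t : ℝ) * lρ) := by
        rw [hlρdef, Real.exp_nat_mul, Real.exp_log hρ'pos]
      rw [hpow, ← Real.exp_add]
      apply Real.exp_le_exp.2
      have hceil : a * t ≤ (m t : ℝ) := Nat.le_ceil _
      have := mul_le_mul_of_nonpos_right hceil hlρneg.le
      nlinarith
    have hBe : ∀ t : ℝ, 1 ≤ t → ENNReal.ofReal (Real.exp (-(2*η*δ*t))) * (En n η) ^ (m t)
        ≤ ENNReal.ofReal (Real.exp (t * (-(2*η*δ) + a * lE + lE * (1/t)))) := by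
      intro t ht
      have ht0 : (0:ℝ) < t := by linarith
      have hEn_eq : En n η = ENNReal.ofReal ((En n η).toReal) :=
        (ENNReal.ofReal_toReal hEn_fin).symm
      rw [hEn_eq, ← ENNReal.ofReal_pow ENNReal.toReal_nonneg,
        ← ENNReal.ofReal_mul (Real.exp_pos _).le]
      apply ENNReal.ofReal_le_ofReal
      have hpow : (En n η).toReal ^ (m t) = Real.exp ((m t : ℝ) * lE) := by
        rw [hlEdef, Real.exp_nat_mul, Real.exp_log hE'pos]
      rw [hpow, ← Real.exp_add]
      apply Real.exp_le_exp.2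
      have hceil : (m t : ℝ) ≤ a * t + 1 := by
        have := Nat.ceil_lt_add_one (by positivity : (0:ℝ) ≤ a * t)
        exact this.le
      have h1 := mul_le_mul_of_nonneg_right hceil hlE0
      have h2 : t * (-(2*η*δ) + a * lE + lE * (1/t)) = -(2*η*δ*t) + (a*t+1) * lE := by
        field_simp
        ring
      rw [h2]
      linarith
    -- combined bound
    have key : ∀ t : ℝ, 1 ≤ t → μ {ω | 2 * δ < |Z t ω / t - Zn n t ω / t|}
        ≤ ENNReal.ofReal (2 * Real.exp
            (t * max (θ + a * lρ) (-(2*η*δ) + a * lE + lE * (1/t)))) := by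
      intro t ht
      have hsubset : {ω | 2 * δ < |Z t ω / t - Zn n t ω / t|} ⊆
          ({ω | -(θ*t) ≤ ∑ i ∈ Finset.range (m t), (-θ) * τ i ω} ∪
            {ω | 2*η*δ*t ≤ ∑ i ∈ Finset.range (m t), η * max (|W i ω| - (n:ℝ)) 0}) ∪ Gᶜ := by
        intro ω hω
        by_cases hg : ω ∈ G
        · exact Or.inl (hincl t ht ⟨hω, hg⟩)
        · exact Or.inr hg
      refine le_trans (measure_mono hsubset) ?_
      refine le_trans (measure_union_le _ _) ?_
      rw [hGc, add_zero]
      refine le_trans (measure_union_le _ _) ?_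
      refine le_trans (add_le_add (le_trans (hA t) (hAe t ht))
        (le_trans (hB t) (hBe t ht))) ?_
      rw [← ENNReal.ofReal_add (Real.exp_pos _).le (Real.exp_pos _).le]
      apply ENNReal.ofReal_le_ofReal
      have hm1 : Real.exp (t * (θ + a*lρ))
          ≤ Real.exp (t * max (θ + a * lρ) (-(2*η*δ) + a * lE + lE * (1/t))) :=
        Real.exp_le_exp.2 (mul_le_mul_of_nonneg_left (le_max_left _ _) (by linarith))
      have hm2 : Real.exp (t * (-(2*η*δ) + a * lE + lE * (1/t)))
          ≤ Real.exp (t * max (θ + a * lρ) (-(2*η*δ) + a * lE + lE * (1/t))) :=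
        Real.exp_le_exp.2 (mul_le_mul_of_nonneg_left (le_max_right _ _) (by linarith))
      linarith
    -- per-t bound on the EReal quantity
    have hterm : ∀ t : ℝ, 1 ≤ t →
        (((1 / t : ℝ)) : EReal) * elog (μ {ω | 2 * δ < |Z t ω / t - Zn n t ω / t|})
          ≤ ((Real.log 2 * (1/t)
              + max (θ + a * lρ) (-(2*η*δ) + a * lE + lE * (1/t)) : ℝ) : EReal) := by
      intro t ht
      have ht0 : (0:ℝ) < t := by linarith
      by_cases h0 : μ {ω | 2 * δ < |Z t ω / t - Zn n t ω / t|} = 0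
      · rw [h0]
        have hbot : elog 0 = ⊥ := by simp [elog]
        rw [hbot, EReal.coe_mul_bot_of_pos (by exact_mod_cast one_div_pos.2 ht0)]
        exact bot_le
      · have hne : μ {ω | 2 * δ < |Z t ω / t - Zn n t ω / t|} ≠ ⊤ := measure_ne_top μ _
        have helog : elog (μ {ω | 2 * δ < |Z t ω / t - Zn n t ω / t|})
            = ((Real.log ((μ {ω | 2 * δ < |Z t ω / t - Zn n t ω / t|}).toReal) : ℝ) : EReal) := by
          simp [elog, h0, hne]
        rw [helog, ← EReal.coe_mul]
        apply EReal.coe_le_coe_iff.2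
        have hloge : Real.log ((μ {ω | 2 * δ < |Z t ω / t - Zn n t ω / t|}).toReal)
            ≤ Real.log 2 + t * max (θ + a * lρ) (-(2*η*δ) + a * lE + lE * (1/t)) := by
          have hlog2 := Real.log_le_log (ENNReal.toReal_pos h0 hne)
            (ENNReal.toReal_le_of_le_ofReal (by positivity) (key t ht))
          rw [Real.log_mul two_ne_zero (Real.exp_ne_zero _), Real.log_exp] at hlog2
          exact hlog2
        have hmul := mul_le_mul_of_nonneg_left hloge (by positivity : (0:ℝ) ≤ 1/t)
        refine le_trans hmul (le_of_eq ?_)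
        have htne : t ≠ 0 := ne_of_gt ht0
        field_simp
    -- pass to the limsup
    have h1t : Filter.Tendsto (fun t : ℝ => 1/t) atTop (nhds 0) := by
      simpa [one_div] using (tendsto_inv_atTop_zero : Filter.Tendsto (fun t:ℝ => t⁻¹) atTop (nhds 0))
    have hgt : Filter.Tendsto (fun t : ℝ => Real.log 2 * (1/t)
        + max (θ + a * lρ) (-(2*η*δ) + a * lE + lE * (1/t))) atTop
        (nhds (max (θ + a * lρ) (-(2*η*δ) + a * lE))) := by
      have hh := (h1t.const_mul (Real.log 2)).add
        ((tendsto_const_nhds (x := θ + a * lρ)).max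
          ((h1t.const_mul lE).const_add (-(2*η*δ) + a * lE)))
      simpa using hh
    have hco : Filter.Tendsto (fun t : ℝ => ((Real.log 2 * (1/t)
        + max (θ + a * lρ) (-(2*η*δ) + a * lE + lE * (1/t)) : ℝ) : EReal)) atTop
        (nhds ((max (θ + a * lρ) (-(2*η*δ) + a * lE) : ℝ) : EReal)) :=
      (continuous_coe_real_ereal.tendsto _).comp hgt
    simp only [hL]
    refine le_trans (Filter.limsup_le_limsup (eventually_atTop.2 ⟨1, hterm⟩)) ?_
    rw [hco.limsup_eq]
  -- log of truncated mgf tends to 0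
  have hlog0 : ∀ η : ℝ, 0 < η → (∫⁻ ω, ENNReal.ofReal (Real.exp (η * |W 0 ω|)) ∂μ) < ⊤ →
      Filter.Tendsto (fun n : ℕ => Real.log (En n η).toReal) atTop (nhds 0) := by
    intro η hη hfin
    have hF : ∀ n : ℕ, Measurable fun ω =>
        ENNReal.ofReal (Real.exp (η * max (|W 0 ω| - (n:ℝ)) 0)) :=
      fun n => ((((hWm 0).abs.sub measurable_const).max
        measurable_const).const_mul η).exp.ennreal_ofReal
    have htendEn : Filter.Tendsto (fun n : ℕ => En n η) atTop (nhds 1) := by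
      have hlim := tendsto_lintegral_of_dominated_convergence
        (F := fun n ω => ENNReal.ofReal (Real.exp (η * max (|W 0 ω| - (n:ℝ)) 0)))
        (f := fun _ω => (1 : ENNReal))
        (fun ω => ENNReal.ofReal (Real.exp (η * |W 0 ω|)))
        hF ?_ hfin.ne ?_
      · have h1 : ∫⁻ _ω, (1:ENNReal) ∂μ = 1 := by simp
        rw [h1] at hlim
        exact hlim
      · intro nn
        filter_upwards with ω
        apply ENNReal.ofReal_le_ofReal
        apply Real.exp_le_exp.2
        apply mul_le_mul_of_nonneg_left _ hη.le
        exact max_le (by linarith [abs_nonneg (W 0 ω), (Nat.cast_nonneg nn : (0:ℝ) ≤ nn)])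
          (abs_nonneg _)
      · filter_upwards with ω
        have hevent : ∀ᶠ nn : ℕ in atTop,
            ENNReal.ofReal (Real.exp (η * max (|W 0 ω| - (nn:ℝ)) 0)) = 1 := by
          filter_upwards [eventually_ge_atTop ⌈|W 0 ω|⌉₊] with nn hnn
          have hmax : max (|W 0 ω| - (nn:ℝ)) 0 = 0 := by
            apply max_eq_right
            have h1 : |W 0 ω| ≤ (⌈|W 0 ω|⌉₊ : ℝ) := Nat.le_ceil _
            have h2 : ((⌈|W 0 ω|⌉₊ : ℕ) : ℝ) ≤ (nn : ℝ) := by exact_mod_cast hnn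
            linarith
          rw [hmax]
          simp
        exact Filter.Tendsto.congr' (Filter.EventuallyEq.symm hevent) tendsto_const_nhds
    have htoReal : Filter.Tendsto (fun n : ℕ => (En n η).toReal) atTop (nhds 1) := by
      have := (ENNReal.tendsto_toReal ENNReal.one_ne_top).comp htendEn
      exact this
    have := ((Real.continuousAt_log one_ne_zero).tendsto).comp htoReal
    rw [Real.log_one] at this
    exact this
  -- combining step
  have step : ∀ b : ℝ, (∃ η : ℝ, 0 < η ∧
      (∫⁻ ω, ENNReal.ofReal (Real.exp (η * |W 0 ω|)) ∂μ) < ⊤ ∧ b < 2*η*δ) →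
      Filter.limsup L atTop ≤ ((-b : ℝ) : EReal) := by
    rintro b ⟨η, hη, hfin, hb⟩
    set a : ℝ := max 1 ((θ + b) / (-lρ)) with hadef
    have ha1 : 1 ≤ a := le_max_left _ _
    have haq : (θ + b) / (-lρ) ≤ a := le_max_right _ _
    have hlρne : lρ ≠ 0 := ne_of_lt hlρneg
    have hbranch1 : θ + a * lρ ≤ -b := by
      have h := mul_le_mul_of_nonpos_right haq hlρneg.le
      have heq : (θ + b) / (-lρ) * lρ = -(θ + b) := by
        rw [div_neg, neg_mul, div_mul_cancel₀ _ hlρne]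
      rw [heq] at h
      linarith
    have hev : ∀ᶠ n : ℕ in atTop,
        a * Real.log (En n η).toReal ≤ 2*η*δ - b := by
      have htend : Filter.Tendsto (fun n : ℕ => a * Real.log (En n η).toReal)
          atTop (nhds 0) := by
        simpa using (hlog0 η hη hfin).const_mul a
      have hlt : (0:ℝ) < 2*η*δ - b := by linarith
      exact htend.eventually_le_const hlt
    refine Filter.limsup_le_of_le (by isBoundedDefault) ?_
    filter_upwards [hev] with n hn
    refine le_trans (main η a hη ha1 hfin n) ?_
    apply EReal.coe_le_coe_iff.2
    apply max_le hbranch1 (by linarith)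
  rcases eq_or_ne η₀ ⊤ with htop | htop
  · -- η₀ = ⊤ : RHS is ⊥
    have hrhs : -((η₀ : EReal) * ((δ / 2 : ℝ) : EReal)) = ⊥ := by
      rw [htop]
      have : ((⊤ : ENNReal) : EReal) = ⊤ := rfl
      rw [this, EReal.top_mul_of_pos (by exact_mod_cast half_pos hδ), EReal.neg_top]
    rw [hrhs]
    by_contra hcon
    rw [not_le] at hcon
    obtain ⟨r, _hr1, hr2⟩ := EReal.exists_between_coe_real hcon
    have hK : Filter.limsup L atTop ≤ ((-(1 - r) : ℝ) : EReal) := by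
      apply step
      -- choose η from unboundedness of the set
      have hsup : sSup {η : ENNReal | η ≠ ⊤ ∧
          ∫⁻ ω, ENNReal.ofReal (Real.exp (η.toReal * |W 0 ω|)) ∂μ < ⊤} = ⊤ := by
        rw [← hη₀]; exact htop
      have hlt : ENNReal.ofReal (max 1 ((1 - r + 1) / (2*δ))) < sSup {η : ENNReal | η ≠ ⊤ ∧
          ∫⁻ ω, ENNReal.ofReal (Real.exp (η.toReal * |W 0 ω|)) ∂μ < ⊤} := by
        rw [hsup]; exact ENNReal.ofReal_lt_top
      obtain ⟨s, hs, hlt2⟩ := lt_sSup_iff.1 hlt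
      obtain ⟨hs_ne_top, hs_fin⟩ := hs
      refine ⟨s.toReal, ?_, hs_fin, ?_⟩
      · have h1 : (1:ℝ) ≤ s.toReal := by
          have := ENNReal.toReal_mono hs_ne_top hlt2.le
          rw [ENNReal.toReal_ofReal (le_max_of_le_left zero_le_one)] at this
          exact le_trans (le_max_left _ _) this
        linarith
      · have h2 : (1 - r + 1) / (2*δ) ≤ s.toReal := by
          have := ENNReal.toReal_mono hs_ne_top hlt2.le
          rw [ENNReal.toReal_ofReal (le_max_of_le_left zero_le_one)] at this
          exact le_trans (le_max_right _ _) this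
        have h3 : (1 - r + 1) ≤ 2 * s.toReal * δ := by
          rw [div_le_iff₀ (by linarith)] at h2
          linarith
        linarith
    have : ((-(1 - r) : ℝ) : EReal) < ((r : ℝ) : EReal) := by
      exact_mod_cast (by linarith : -(1 - r) < r)
    exact absurd (lt_of_le_of_lt hK this) (not_lt.2 hr2.le)
  · -- η₀ finite
    have hη₀' : 0 < η₀.toReal := ENNReal.toReal_pos hη₀pos.ne' htop
    have hrhs : -((η₀ : EReal) * ((δ / 2 : ℝ) : EReal))
        = ((-(η₀.toReal * (δ/2)) : ℝ) : EReal) := by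
      have hcoe : ((η₀ : EReal)) = ((η₀.toReal : ℝ) : EReal) := by
        conv_lhs => rw [← ENNReal.ofReal_toReal htop]
        rw [EReal.coe_ennreal_ofReal, max_eq_left ENNReal.toReal_nonneg]
      rw [hcoe, ← EReal.coe_mul, ← EReal.coe_neg]
    rw [hrhs]
    apply step
    have hhalf : η₀ / 2 < sSup {η : ENNReal | η ≠ ⊤ ∧
        ∫⁻ ω, ENNReal.ofReal (Real.exp (η.toReal * |W 0 ω|)) ∂μ < ⊤} := by
      rw [← hη₀]
      exact ENNReal.half_lt_self hη₀pos.ne' htop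
    obtain ⟨s, hs, hlt2⟩ := lt_sSup_iff.1 hhalf
    obtain ⟨hs_ne_top, hs_fin⟩ := hs
    refine ⟨s.toReal, ?_, hs_fin, ?_⟩
    · have := ENNReal.toReal_mono hs_ne_top hlt2.le
      rw [ENNReal.toReal_div] at this
      simp only [ENNReal.toReal_ofNat] at this
      linarith
    · have := ENNReal.toReal_mono hs_ne_top hlt2.le
      rw [ENNReal.toReal_div] at this
      simp only [ENNReal.toReal_ofNat] at this
      nlinarith
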